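/- Let (X,μ) be a σ-finite measure space. If (u_k, t_k) → (u, t) in L¹(X,μ) × ℝ with t, t_k > 0, then μ({u_k ≥ t_k} \ {u ≥ t}) → 0 as k → ∞. -/

import Mathlib

open MeasureTheory Filter
open scoped ENNReal

/-- Semicontinuity of slicing: if `u_k → u` in `L¹(X,μ)` and `t_k → t` with `t, t_k > 0`,
then `μ({u_k ≥ t_k} \ {u ≥ t}) → 0` as `k → ∞`. -/
theorem stmt5 {X : Type*} [MeasurableSpace X] (μ : Measure X) [SigmaFinite μ]
    (u : ℕ → X → ℝ) (v : X → ℝ) (t : ℕ → ℝ) (s : ℝ)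
    (hu : ∀ k, Integrable (u k) μ) (hv : Integrable v μ)
    (hconv : Tendsto (fun k => ∫ x, |u k x - v x| ∂μ) atTop (nhds 0))
    (ht : Tendsto t atTop (nhds s)) (hs : 0 < s) (htk : ∀ k, 0 < t k) :
    Tendsto (fun k => μ ({x | t k ≤ u k x} \ {x | s ≤ v x})) atTop (nhds 0) := by
  rw [ENNReal.tendsto_nhds_zero]
  intro ε0 hε0
  -- the bands
  set δ : ℕ → ℝ := fun n => s / 2 * (1 / (n + 1)) with hδ
  have hδpos : ∀ n, 0 < δ n := fun n => by positivity
  have hδle : ∀ n, δ n ≤ s / 2 := by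
    intro n
    have h1 : (1 : ℝ) / (n + 1) ≤ 1 := by
      rw [div_le_one (by positivity)]; simp
    calc δ n ≤ s / 2 * 1 := by
          exact mul_le_mul_of_nonneg_left h1 (by linarith)
      _ = s / 2 := mul_one _
  set C : ℕ → Set X := fun n => {x | s - δ n ≤ v x ∧ v x < s} with hC
  have hCnull : ∀ n, NullMeasurableSet (C n) μ := by
    intro n
    have : C n = v ⁻¹' (Set.Ico (s - δ n) s) := rfl
    rw [this]
    exact hv.aemeasurable.nullMeasurable measurableSet_Ico
  have hCanti : Antitone C := by
    intro n m hnm x hx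
    have hδm : δ m ≤ δ n := by
      apply mul_le_mul_of_nonneg_left _ (by linarith)
      apply div_le_div_of_nonneg_left one_pos.le (by positivity)
      exact_mod_cast by linarith
    exact ⟨by linarith [hx.1], hx.2⟩
  have hCfin : μ (C 0) ≠ ∞ := by
    refine (lt_of_le_of_lt (measure_mono ?_) (hv.measure_ge_lt_top (half_pos hs))).ne
    intro x hx
    have := hx.1
    have h0 : δ 0 = s / 2 := by simp [hδ]
    simp only [Set.mem_setOf_eq]
    linarith [hx.1, h0 ▸ hx.1]
  have hCempty : ⋂ n, C n = ∅ := by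
    ext x
    simp only [Set.mem_iInter, Set.mem_empty_iff_false, iff_false]
    intro h
    have hlim : Tendsto (fun n : ℕ => s - δ n) atTop (nhds s) := by
      have : Tendsto δ atTop (nhds 0) := by
        have h0 : Tendsto (fun n : ℕ => s / 2 * (1 / (n + 1 : ℝ))) atTop (nhds (s / 2 * 0)) :=
          tendsto_one_div_add_atTop_nhds_zero_nat.const_mul (s / 2)
        rw [mul_zero] at h0
        exact h0
      simpa using tendsto_const_nhds.sub this
    have : s ≤ v x := le_of_tendsto hlim (Eventually.of_forall fun n => (h n).1)
    exact absurd (h 0).2 (not_lt.mpr this)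
  have hCtend : Tendsto (fun n => μ (C n)) atTop (nhds 0) := by
    have := tendsto_measure_iInter_atTop hCnull hCanti ⟨0, hCfin⟩
    rw [hCempty] at this
    simpa [Function.comp_def] using this
  obtain ⟨n, hn⟩ : ∃ n, μ (C n) < ε0 / 2 :=
    (hCtend.eventually_lt_const (ENNReal.half_pos hε0.ne')).exists
  -- Markov bound
  have hint : ∀ k, Integrable (fun x => |u k x - v x|) μ := fun k => ((hu k).sub hv).abs
  have hMfin : ∀ k, μ {x | δ n / 2 ≤ |u k x - v x|} ≠ ∞ := fun k =>
    ((hint k).measure_ge_lt_top (half_pos (hδpos n))).ne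
  have hMbound : ∀ k, μ {x | δ n / 2 ≤ |u k x - v x|} ≤
      ENNReal.ofReal (2 / δ n * ∫ x, |u k x - v x| ∂μ) := by
    intro k
    have hmar := mul_meas_ge_le_integral_of_nonneg
      (Eventually.of_forall fun x => abs_nonneg (u k x - v x)) (hint k) (δ n / 2)
    have hδn := hδpos n
    have h1 : (μ {x | δ n / 2 ≤ |u k x - v x|}).toReal ≤ 2 / δ n * ∫ x, |u k x - v x| ∂μ := by
      rw [div_mul_eq_mul_div, le_div_iff₀ hδn]
      calc (μ {x | δ n / 2 ≤ |u k x - v x|}).toReal * δ n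
          = δ n / 2 * (μ {x | δ n / 2 ≤ |u k x - v x|}).toReal * 2 := by ring
        _ ≤ (∫ x, |u k x - v x| ∂μ) * 2 := by linarith [show δ n / 2 * (μ {x | δ n / 2 ≤ |u k x - v x|}).toReal ≤ ∫ x, |u k x - v x| ∂μ from hmar]
        _ = 2 * ∫ x, |u k x - v x| ∂μ := mul_comm _ _
    calc μ {x | δ n / 2 ≤ |u k x - v x|}
        = ENNReal.ofReal (μ {x | δ n / 2 ≤ |u k x - v x|}).toReal :=
          (ENNReal.ofReal_toReal (hMfin k)).symm
      _ ≤ _ := ENNReal.ofReal_le_ofReal h1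
  have hMtend : Tendsto (fun k => ENNReal.ofReal (2 / δ n * ∫ x, |u k x - v x| ∂μ))
      atTop (nhds 0) := by
    have := ENNReal.tendsto_ofReal (hconv.const_mul (2 / δ n))
    simpa using this
  have hMev : ∀ᶠ k in atTop, μ {x | δ n / 2 ≤ |u k x - v x|} < ε0 / 2 := by
    filter_upwards [hMtend.eventually_lt_const (ENNReal.half_pos hε0.ne')] with k hk
    exact lt_of_le_of_lt (hMbound k) hk
  have htev : ∀ᶠ k in atTop, s - δ n / 2 ≤ t k :=
    ht.eventually_const_le (show s - δ n / 2 < s by linarith [hδpos n])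
  filter_upwards [hMev, htev] with k hk1 hk2
  have hincl : {x | t k ≤ u k x} \ {x | s ≤ v x} ⊆
      C n ∪ {x | δ n / 2 ≤ |u k x - v x|} := by
    rintro x ⟨hx1, hx2⟩
    simp only [Set.mem_setOf_eq] at hx1 hx2
    push_neg at hx2
    by_cases hcase : s - δ n ≤ v x
    · exact Or.inl ⟨hcase, hx2⟩
    · right
      push_neg at hcase
      have : δ n / 2 ≤ u k x - v x := by linarith
      exact this.trans (le_abs_self _)
  calc μ ({x | t k ≤ u k x} \ {x | s ≤ v x})
      ≤ μ (C n ∪ {x | δ n / 2 ≤ |u k x - v x|}) := measure_mono hincl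
    _ ≤ μ (C n) + μ {x | δ n / 2 ≤ |u k x - v x|} := measure_union_le _ _
    _ ≤ ε0 / 2 + ε0 / 2 := add_le_add hn.le hk1.le
    _ = ε0 := ENNReal.add_halves ε0
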